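/- Let V be an (r+1)-toroidal vertex algebra, σ an automorphism of V with σ^N = 1, and (W, Y_W) a σ-twisted V-module. For u ∈ V^s (0 ≤ s < N) and v ∈ V, the twisted iterate formula holds: Y_W(Y(u;z_0,z)v;y_0,y) = Res_{x_0} ((x_0−z_0)/y_0)^{s/N}·X, and also Y_W(Y(u;z_0,z)v;y_0,y) = Res_{x_0} ((y_0+z_0)/x_0)^{−s/N}·X, where X = z_0^{−1}δ((x_0−y_0)/z_0)Y_W(u;x_0,zy)Y_W(v;y_0,y) − z_0^{−1}δ((y_0−x_0)/(−z_0))Y_W(v;y_0,y)Y_W(u;x_0,zy). -/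

import Mathlib

open scoped BigOperators

attribute [local instance] Classical.propDecidable

noncomputable section

/-- Generalized binomial coefficient `C(q, i)` for a rational `q`:
`q(q-1)⋯(q-i+1)/i!`. -/
def qchoose (q : ℚ) (i : ℕ) : ℚ := (descPochhammer ℚ i).eval q / (Nat.factorial i : ℚ)

/-- `C(q, i)` as a complex scalar. -/
def binomC (q : ℚ) (i : ℕ) : ℂ := (qchoose q i : ℂ)

/-- `ω_N = exp(2π√-1/N)`, the principal primitive `N`-th root of unity. -/
def rtu (N : ℕ) : ℂ := Complex.exp (2 * Real.pi * Complex.I / (N : ℂ))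

/-- An `(r+1)`-toroidal vertex algebra, encoded through the mode operators
`v_{m₀,m}` of the vertex operator map
`Y(v;x₀,x) = ∑ v_{m₀,m} x₀^{-m₀-1} x^{-m}`.  The axioms are the
coefficient-wise versions of the vacuum, creation and Jacobi identity
axioms. -/
structure ToroidalVA (r : ℕ) (V : Type) [AddCommGroup V] [Module ℂ V] where
  /-- the mode maps `v ↦ v_{m₀,m}` -/
  Y : V →ₗ[ℂ] (ℤ → (Fin r → ℤ) → Module.End ℂ V)
  /-- the vacuum vector `𝟏` -/
  vac : V
  /-- lower truncation: `Y` maps into `E(V,r) = Hom(V, V[[x₁^{±1},…]]((x₀)))` -/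
  trunc : ∀ u v : V, ∃ M : ℤ, ∀ m0 : ℤ, M ≤ m0 → ∀ m : Fin r → ℤ, Y u m0 m v = 0
  /-- `Y(𝟏;x₀,x)v = v` -/
  vac_act : ∀ (v : V) (m0 : ℤ) (m : Fin r → ℤ),
    Y vac m0 m v = if m0 = -1 ∧ m = 0 then v else 0
  /-- `Y(v;x₀,x)𝟏 ∈ V[[x₀,x₁^{±1},…,x_r^{±1}]]` -/
  creation : ∀ (v : V) (m0 : ℤ) (m : Fin r → ℤ), 0 ≤ m0 → Y v m0 m vac = 0
  /-- the Jacobi identity, written out in components -/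
  jacobi : ∀ (u v w : V) (m0 n0 k0 : ℤ) (p q : Fin r → ℤ),
    (∑ᶠ i : ℕ, ((-1 : ℂ) ^ i * binomC (k0 : ℚ) i) •
      (Y u (m0 + k0 - i) p (Y v (n0 + i) (q - p) w)
        - ((-1 : ℂ) ^ (k0 : ℤ)) • Y v (n0 + k0 - i) (q - p) (Y u (m0 + i) p w)))
    = ∑ᶠ i : ℕ, binomC (m0 : ℚ) i • Y (Y u (k0 + i) p v) (m0 + n0 - i) q w

/-- An automorphism of an `(r+1)`-toroidal vertex algebra: a bijective linear
map fixing the vacuum and intertwining all mode operators. -/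
def ToroidalVA.IsAut {r : ℕ} {V : Type} [AddCommGroup V] [Module ℂ V]
    (T : ToroidalVA r V) (σ : Module.End ℂ V) : Prop :=
  Function.Bijective σ ∧ σ T.vac = T.vac ∧
    ∀ (u v : V) (m0 : ℤ) (m : Fin r → ℤ), σ (T.Y u m0 m v) = T.Y (σ u) m0 m (σ v)

/-- A `σ`-twisted module for an `(r+1)`-toroidal vertex algebra `V` (with `σ`
an automorphism of period `N`), encoded through the mode operators
`v_{m₀,m}` (`m₀ ∈ (1/N)ℤ`) of `Y_W(v;x₀,x) = ∑ v_{m₀,m} x₀^{-m₀-1} x^{-m}`.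
The twisted Jacobi identity is recorded in its coefficient-wise form, for
`σ`-eigenvectors `u ∈ V^s` (which is equivalent to the usual formulation by
linearity, since `V = ⊕ V^s`). -/
structure TwistedModule (r N : ℕ) {V : Type} [AddCommGroup V] [Module ℂ V]
    (T : ToroidalVA r V) (σ : Module.End ℂ V)
    (W : Type) [AddCommGroup W] [Module ℂ W] where
  /-- the twisted mode maps `v ↦ v_{m₀,m}` -/
  Yw : V →ₗ[ℂ] (ℚ → (Fin r → ℤ) → Module.End ℂ W)
  /-- modes are supported on `m₀ ∈ (1/N)ℤ` -/
  frac : ∀ (u : V) (m0 : ℚ) (m : Fin r → ℤ),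
    (∀ t : ℤ, m0 ≠ (t : ℚ) / (N : ℚ)) → Yw u m0 m = 0
  /-- lower truncation: `Y_W` maps into `E(W,r;N)` -/
  trunc : ∀ (u : V) (w : W), ∃ M : ℚ, ∀ m0 : ℚ, M ≤ m0 → ∀ m : Fin r → ℤ,
    Yw u m0 m w = 0
  /-- `Y_W(𝟏;x₀,x) = 1_W` -/
  vac_act : ∀ (m0 : ℚ) (m : Fin r → ℤ),
    Yw T.vac m0 m = if m0 = -1 ∧ m = 0 then 1 else 0
  /-- the twisted Jacobi identity in components, for `u ∈ V^s` -/
  jacobi : ∀ (u : V) (s : ℕ), s < N → σ u = (rtu N) ^ s • u →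
    ∀ (v : V) (w : W) (m0 n0 : ℚ) (k0 : ℤ) (p q : Fin r → ℤ),
    (∑ᶠ i : ℕ, ((-1 : ℂ) ^ i * binomC (k0 : ℚ) i) •
      (Yw u (m0 + k0 - i) p (Yw v (n0 + i) (q - p) w)
        - ((-1 : ℂ) ^ (k0 : ℤ)) • Yw v (n0 + k0 - i) (q - p) (Yw u (m0 + i) p w)))
    = if ∃ t : ℤ, m0 = (s : ℚ) / (N : ℚ) + (t : ℚ) then
        ∑ᶠ i : ℕ, binomC m0 i • Yw (T.Y u (k0 + i) p v) (m0 + n0 - i) q w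
      else 0

end



noncomputable section
open Finset

lemma fact_ne (n : ℕ) : ((Nat.factorial n : ℚ)) ≠ 0 := by
  exact_mod_cast Nat.factorial_ne_zero n

lemma desc_smeval_eq_eval (q : ℚ) (n : ℕ) :
    (descPochhammer ℤ n).smeval q = (descPochhammer ℚ n).eval q := by
  induction n with
  | zero => simp [descPochhammer_zero, Polynomial.smeval_one]
  | succ n ih =>
    rw [descPochhammer_succ_right, descPochhammer_succ_right, Polynomial.smeval_mul,
      Polynomial.eval_mul, ih, Polynomial.smeval_sub, Polynomial.eval_sub,
      Polynomial.smeval_X, Polynomial.eval_X, Polynomial.smeval_natCast, Polynomial.eval_natCast]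
    norm_num

lemma desc_eval_mul (q : ℚ) (i j : ℕ) :
    (descPochhammer ℚ i).eval q * (descPochhammer ℚ j).eval (q - i)
      = (descPochhammer ℚ (i + j)).eval q := by
  have h := congrArg (Polynomial.eval q) (descPochhammer_mul (R := ℚ) i j)
  simpa [Polynomial.eval_mul, Polynomial.eval_comp] using h

lemma choose_fact (i j : ℕ) :
    ((i+j).choose i : ℚ) * (i.factorial : ℚ) * (j.factorial : ℚ) = ((i+j).factorial : ℚ) := by
  have hnat := Nat.choose_mul_factorial_mul_factorial (Nat.le_add_right i j)
  rw [Nat.add_sub_cancel_left] at hnat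
  exact_mod_cast hnat

lemma qchoose_mul (q : ℚ) (i j : ℕ) :
    qchoose q i * qchoose (q - i) j = ((i+j).choose i : ℚ) * qchoose q (i+j) := by
  simp only [qchoose]
  rw [div_mul_div_comm, desc_eval_mul, mul_div_assoc', div_eq_div_iff (by positivity) (fact_ne _)]
  linear_combination (-Polynomial.eval q (descPochhammer ℚ (i+j))) * choose_fact i j

lemma sum_A (q : ℚ) (n : ℕ) :
    ∑ p ∈ antidiagonal n, ((-1 : ℚ) ^ p.1 * qchoose q p.1) * qchoose (q - p.1) p.2
      = if n = 0 then 1 else 0 := by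
  have hterm : ∀ p ∈ antidiagonal n,
      ((-1 : ℚ) ^ p.1 * qchoose q p.1) * qchoose (q - p.1) p.2
        = ((-1 : ℚ) ^ p.1 * (n.choose p.1 : ℚ)) * qchoose q n := by
    intro p hp
    obtain ⟨i, j⟩ := p
    rw [Finset.HasAntidiagonal.mem_antidiagonal] at hp
    subst hp
    rw [mul_assoc, qchoose_mul]
    ring
  rw [Finset.sum_congr rfl hterm, ← Finset.sum_mul]
  have halt : ∑ p ∈ antidiagonal n, ((-1 : ℚ) ^ p.1 * (n.choose p.1 : ℚ))
      = if n = 0 then 1 else 0 := by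
    rw [Finset.Nat.sum_antidiagonal_eq_sum_range_succ_mk]
    have h := Int.alternating_sum_range_choose (n := n)
    exact_mod_cast congrArg (fun z : ℤ => (z : ℚ)) h
  rw [halt]
  by_cases h : n = 0
  · subst h; simp [qchoose, descPochhammer_zero, Nat.factorial]
  · simp [h]

lemma sum_B (q : ℚ) (n : ℕ) :
    ∑ p ∈ antidiagonal n, qchoose (-q) p.1 * qchoose q p.2
      = if n = 0 then 1 else 0 := by
  have hvdm := Ring.descPochhammer_smeval_add (R := ℚ) (r := -q) (s := q) n (Commute.all _ _)
  rw [neg_add_cancel, desc_smeval_eq_eval, descPochhammer_eval_zero] at hvdm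
  have hterm : ∀ p ∈ antidiagonal n,
      qchoose (-q) p.1 * qchoose q p.2
        = ((n.choose p.1 : ℚ) * ((descPochhammer ℤ p.1).smeval (-q) * (descPochhammer ℤ p.2).smeval q))
            / (n.factorial : ℚ) := by
    intro p hp
    obtain ⟨i, j⟩ := p
    rw [Finset.HasAntidiagonal.mem_antidiagonal] at hp
    subst hp
    simp only [qchoose, desc_smeval_eq_eval]
    rw [div_mul_div_comm, div_eq_div_iff (by positivity) (fact_ne _)]
    linear_combination (-Polynomial.eval (-q) (descPochhammer ℚ i) * Polynomial.eval q (descPochhammer ℚ j)) * choose_fact i j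
  rw [Finset.sum_congr rfl hterm, ← Finset.sum_div]
  rw [← hvdm] at *
  rw [hvdm]
  by_cases h : n = 0
  · subst h; simp [Nat.factorial]
  · simp [h]


lemma inversion {W : Type} [AddCommGroup W] [Module ℂ W]
    (c : ℕ → ℂ) (d : ℕ → ℕ → ℂ) (A : ℕ → W) (n₀ : ℕ) (h0 : 0 < n₀)
    (hA : ∀ n, n₀ ≤ n → A n = 0)
    (hδ : ∀ n, ∑ p ∈ antidiagonal n, c p.1 * d p.1 p.2 = if n = 0 then 1 else 0) :
    ∑ᶠ i : ℕ, c i • ∑ᶠ j : ℕ, d i j • A (i + j) = A 0 := by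
  have hinner : ∀ i : ℕ, (∑ᶠ j : ℕ, d i j • A (i + j))
      = ∑ j ∈ range n₀, d i j • A (i + j) := by
    intro i
    apply finsum_eq_finset_sum_of_support_subset
    intro j hj
    simp only [Function.mem_support, Ne] at hj
    by_contra hmem
    apply hj
    rw [hA (i + j) (le_trans (not_lt.mp (fun h => hmem (mem_range.mpr h))) (Nat.le_add_left _ _)),
      smul_zero]
  have houter : ∑ᶠ i : ℕ, c i • ∑ᶠ j : ℕ, d i j • A (i + j)
      = ∑ i ∈ range n₀, c i • ∑ᶠ j : ℕ, d i j • A (i + j) := by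
    apply finsum_eq_finset_sum_of_support_subset
    intro i hi
    simp only [Function.mem_support, Ne] at hi
    by_contra hmem
    apply hi
    have hin : n₀ ≤ i := not_lt.mp (fun h => hmem (mem_range.mpr h))
    rw [hinner i]
    rw [Finset.sum_eq_zero (fun j _ => by
      rw [hA (i + j) (le_trans hin (Nat.le_add_right _ _)), smul_zero]), smul_zero]
  rw [houter]
  have hstep : ∑ i ∈ range n₀, c i • ∑ᶠ j : ℕ, d i j • A (i + j)
      = ∑ p ∈ range n₀ ×ˢ range n₀, (c p.1 * d p.1 p.2) • A (p.1 + p.2) := by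
    rw [Finset.sum_product]
    exact Finset.sum_congr rfl fun i _ => by
      rw [hinner i, Finset.smul_sum]
      exact Finset.sum_congr rfl fun j _ => by rw [smul_smul]
  rw [hstep]
  -- restrict to the union of antidiagonals
  set B : Finset (ℕ × ℕ) := (range n₀).biUnion (fun n => antidiagonal n) with hB
  have hsub : B ⊆ range n₀ ×ˢ range n₀ := by
    intro p hp
    simp only [hB, mem_biUnion, mem_range, Finset.HasAntidiagonal.mem_antidiagonal] at hp
    obtain ⟨n, hn, hpn⟩ := hp
    rw [mem_product, mem_range, mem_range]
    constructor
    · exact lt_of_le_of_lt (hpn ▸ Nat.le_add_right _ _) hn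
    · exact lt_of_le_of_lt (hpn ▸ Nat.le_add_left _ _) hn
  have hzero : ∀ p ∈ range n₀ ×ˢ range n₀, p ∉ B →
      (c p.1 * d p.1 p.2) • A (p.1 + p.2) = 0 := by
    intro p _ hp
    have hge : n₀ ≤ p.1 + p.2 := by
      by_contra h
      apply hp
      simp only [hB, mem_biUnion, mem_range, Finset.HasAntidiagonal.mem_antidiagonal]
      exact ⟨p.1 + p.2, not_le.mp h, rfl⟩
    rw [hA _ hge, smul_zero]
  rw [← Finset.sum_subset hsub hzero]
  have hdisj : ∀ x ∈ range n₀, ∀ y ∈ range n₀, x ≠ y →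
      Disjoint (antidiagonal x) (antidiagonal y) := by
    intro x _ y _ hxy
    rw [Finset.disjoint_left]
    intro p hp hq
    rw [Finset.HasAntidiagonal.mem_antidiagonal] at hp hq
    exact hxy (hp ▸ hq)
  rw [hB, Finset.sum_biUnion hdisj]
  have hrow : ∀ n ∈ range n₀, ∑ p ∈ antidiagonal n, (c p.1 * d p.1 p.2) • A (p.1 + p.2)
      = (if n = 0 then (1:ℂ) else 0) • A n := by
    intro n _
    rw [← hδ n, Finset.sum_smul]
    exact Finset.sum_congr rfl fun p hp => by rw [mem_antidiagonal.mp hp]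
  rw [Finset.sum_congr rfl hrow]
  rw [Finset.sum_eq_single 0]
  · simp
  · intro n _ hn; simp [hn]
  · intro h; exact absurd (mem_range.mpr h0) h

end

noncomputable section

/-- (Twisted iterate formula.)  For `u ∈ V^s` (`0 ≤ s < N`)
and `v ∈ V`,
`Y_W(Y(u;z₀,z)v;y₀,y) = Res_{x₀} ((x₀-z₀)/y₀)^{s/N}·X`
and
`Y_W(Y(u;z₀,z)v;y₀,y) = Res_{x₀} ((y₀+z₀)/x₀)^{-s/N}·X`,
where
`X = z₀^{-1}δ((x₀-y₀)/z₀)Y_W(u;x₀,zy)Y_W(v;y₀,y)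
   - z₀^{-1}δ((y₀-x₀)/(-z₀))Y_W(v;y₀,y)Y_W(u;x₀,zy)`.
Below both sides are written out in coefficients (the coefficient of
`z₀^{-k-1} y₀^{-β-1} z^{-p} y^{-q}`, applied to `w ∈ W`): the coefficient of
`x₀^{-m-1} y₀^{-n-1} z₀^{-k'-1} z^{-p} y^{-q}` of `X` is the inner sum over
`l`, and the residue `Res_{x₀}` together with the expansion of the extra
binomial factor yields the outer sum over `i`. -/
theorem twisted_iterate_formula
    {r N : ℕ} (hr : 0 < r) (hN : 0 < N)
    {V : Type} [AddCommGroup V] [Module ℂ V]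
    (T : ToroidalVA r V) (σ : Module.End ℂ V)
    (haut : T.IsAut σ) (hper : σ ^ N = 1)
    {W : Type} [AddCommGroup W] [Module ℂ W]
    (M : TwistedModule r N T σ W)
    (u : V) (s : ℕ) (hs : s < N) (hu : σ u = (rtu N) ^ s • u) (v : V) :
    ∀ (k : ℤ) (β : ℚ) (p q : Fin r → ℤ) (w : W),
      (M.Yw (T.Y u k p v) β q w
        = ∑ᶠ i : ℕ, ((-1 : ℂ) ^ i * binomC ((s : ℚ) / (N : ℚ)) i) •
            ∑ᶠ l : ℕ, ((-1 : ℂ) ^ l * binomC ((k : ℚ) + (i : ℚ)) l) •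
              (M.Yw u ((s : ℚ) / (N : ℚ) + (k : ℚ) - l) p
                  (M.Yw v (β - (s : ℚ) / (N : ℚ) + l) (q - p) w)
                - ((-1 : ℂ) ^ (k + (i : ℤ))) •
                  M.Yw v (β - (s : ℚ) / (N : ℚ) + (k : ℚ) + i - l) (q - p)
                    (M.Yw u ((s : ℚ) / (N : ℚ) - i + l) p w)))
      ∧
      (M.Yw (T.Y u k p v) β q w
        = ∑ᶠ i : ℕ, binomC (-(s : ℚ) / (N : ℚ)) i •
            ∑ᶠ l : ℕ, ((-1 : ℂ) ^ l * binomC ((k : ℚ) + (i : ℚ)) l) •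
              (M.Yw u ((s : ℚ) / (N : ℚ) + (k : ℚ) + i - l) p
                  (M.Yw v (β - (s : ℚ) / (N : ℚ) - i + l) (q - p) w)
                - ((-1 : ℂ) ^ (k + (i : ℤ))) •
                  M.Yw v (β - (s : ℚ) / (N : ℚ) + (k : ℚ) - l) (q - p)
                    (M.Yw u ((s : ℚ) / (N : ℚ) + l) p w))) := by

  intro k β p q w
  obtain ⟨Mb, hMb⟩ := T.trunc u v
  set n₀ : ℕ := (Mb - k).toNat + 1 with hn₀
  set A : ℕ → W := fun n => M.Yw (T.Y u (k + n) p v) (β - n) q w with hA_def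
  have hA : ∀ n, n₀ ≤ n → A n = 0 := by
    intro n hn
    have hn' : (n₀ : ℤ) ≤ (n : ℤ) := by exact_mod_cast hn
    have h1 : Mb - k ≤ ((Mb - k).toNat : ℤ) := Int.self_le_toNat _
    have hMk : Mb ≤ k + (n : ℤ) := by
      have : ((Mb - k).toNat : ℤ) + 1 ≤ (n : ℤ) := by push_cast [hn₀] at hn' ⊢; omega
      omega
    have hz : T.Y u (k + n) p v = 0 := hMb _ hMk p
    simp [hA_def, hz]
  have hA0 : A 0 = M.Yw (T.Y u k p v) β q w := by simp [hA_def]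
  constructor
  · -- first formula
    have hδ1 : ∀ n : ℕ, ∑ pr ∈ Finset.HasAntidiagonal.antidiagonal n,
        ((-1:ℂ)^pr.1 * binomC ((s:ℚ)/(N:ℚ)) pr.1) * binomC ((s:ℚ)/(N:ℚ) - (pr.1:ℚ)) pr.2
          = if n = 0 then 1 else 0 := by
      intro n
      have h' := congrArg (fun x : ℚ => (x : ℂ)) (sum_A ((s:ℚ)/(N:ℚ)) n)
      push_cast at h'
      simpa [binomC, qchoose, apply_ite ((↑) : ℚ → ℂ)] using h'
    have hjac : ∀ i : ℕ,
        (∑ᶠ l : ℕ, ((-1 : ℂ) ^ l * binomC ((k : ℚ) + (i : ℚ)) l) •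
          (M.Yw u ((s : ℚ) / (N : ℚ) + (k : ℚ) - l) p
              (M.Yw v (β - (s : ℚ) / (N : ℚ) + l) (q - p) w)
            - ((-1 : ℂ) ^ (k + (i : ℤ))) •
              M.Yw v (β - (s : ℚ) / (N : ℚ) + (k : ℚ) + i - l) (q - p)
                (M.Yw u ((s : ℚ) / (N : ℚ) - i + l) p w)))
        = ∑ᶠ j : ℕ, binomC ((s : ℚ) / (N : ℚ) - (i:ℚ)) j • A (i + j) := by
      intro i
      have hj := M.jacobi u s hs hu v w ((s : ℚ) / (N : ℚ) - i) (β - (s : ℚ) / (N : ℚ))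
        (k + i) p q
      rw [if_pos ⟨(-i : ℤ), by push_cast; ring⟩] at hj
      have e2 : ∑ᶠ j : ℕ, binomC ((s:ℚ)/(N:ℚ) - (i:ℚ)) j • A (i + j)
          = ∑ᶠ j : ℕ, binomC ((s:ℚ)/(N:ℚ) - (i:ℚ)) j •
              M.Yw (T.Y u (k + (i:ℤ) + (j:ℤ)) p v)
                ((s:ℚ)/(N:ℚ) - i + (β - (s:ℚ)/(N:ℚ)) - j) q w := by
        refine finsum_congr fun j => ?_
        have h1 : k + ((i+j : ℕ) : ℤ) = k + (i:ℤ) + (j:ℤ) := by push_cast; ring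
        have h2 : β - ((i+j:ℕ):ℚ) = (s:ℚ)/(N:ℚ) - i + (β - (s:ℚ)/(N:ℚ)) - j := by
          push_cast; ring
        simp only [hA_def]
        rw [h1, h2]
      rw [e2, ← hj]
      refine finsum_congr fun l => ?_
      push_cast
      ring_nf
    have hmain := inversion (fun i => (-1:ℂ)^i * binomC ((s:ℚ)/(N:ℚ)) i)
        (fun i j => binomC ((s:ℚ)/(N:ℚ) - (i:ℚ)) j) A n₀ (Nat.succ_pos _) hA hδ1
    rw [← hA0, ← hmain]
    exact finsum_congr fun i => by rw [hjac i]
  · -- second formula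
    have hδ2 : ∀ n : ℕ, ∑ pr ∈ Finset.HasAntidiagonal.antidiagonal n,
        binomC (-(s:ℚ)/(N:ℚ)) pr.1 * binomC ((s:ℚ)/(N:ℚ)) pr.2
          = if n = 0 then 1 else 0 := by
      intro n
      have h' := congrArg (fun x : ℚ => (x : ℂ)) (sum_B ((s:ℚ)/(N:ℚ)) n)
      push_cast at h'
      simpa [binomC, qchoose, neg_div, apply_ite ((↑) : ℚ → ℂ)] using h'
    have hjac : ∀ i : ℕ,
        (∑ᶠ l : ℕ, ((-1 : ℂ) ^ l * binomC ((k : ℚ) + (i : ℚ)) l) •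
          (M.Yw u ((s : ℚ) / (N : ℚ) + (k : ℚ) + i - l) p
              (M.Yw v (β - (s : ℚ) / (N : ℚ) - i + l) (q - p) w)
            - ((-1 : ℂ) ^ (k + (i : ℤ))) •
              M.Yw v (β - (s : ℚ) / (N : ℚ) + (k : ℚ) - l) (q - p)
                (M.Yw u ((s : ℚ) / (N : ℚ) + l) p w)))
        = ∑ᶠ j : ℕ, binomC ((s : ℚ) / (N : ℚ)) j • A (i + j) := by
      intro i
      have hj := M.jacobi u s hs hu v w ((s : ℚ) / (N : ℚ)) (β - (s : ℚ) / (N : ℚ) - i)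
        (k + i) p q
      rw [if_pos ⟨(0 : ℤ), by push_cast; ring⟩] at hj
      have e2 : ∑ᶠ j : ℕ, binomC ((s:ℚ)/(N:ℚ)) j • A (i + j)
          = ∑ᶠ j : ℕ, binomC ((s:ℚ)/(N:ℚ)) j •
              M.Yw (T.Y u (k + (i:ℤ) + (j:ℤ)) p v)
                ((s:ℚ)/(N:ℚ) + (β - (s:ℚ)/(N:ℚ) - i) - j) q w := by
        refine finsum_congr fun j => ?_
        have h1 : k + ((i+j : ℕ) : ℤ) = k + (i:ℤ) + (j:ℤ) := by push_cast; ring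
        have h2 : β - ((i+j:ℕ):ℚ) = (s:ℚ)/(N:ℚ) + (β - (s:ℚ)/(N:ℚ) - i) - j := by
          push_cast; ring
        simp only [hA_def]
        rw [h1, h2]
      rw [e2, ← hj]
      refine finsum_congr fun l => ?_
      push_cast
      ring_nf
    have hmain := inversion (fun i => binomC (-(s:ℚ)/(N:ℚ)) i)
        (fun i j => binomC ((s:ℚ)/(N:ℚ)) j) A n₀ (Nat.succ_pos _) hA hδ2
    rw [← hA0, ← hmain]
    exact finsum_congr fun i => by rw [hjac i]

end
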